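/- Logarithmic convexity of k-broad norms: let U ⊆ ℝⁿ be measurable, 1 ≤ p, p₀, p₁ < ∞, A ∈ ℕ, 2 ≤ k ≤ n, and let θ ∈ [0,1] satisfy 1/p = (1−θ)/p₀ + θ/p₁. There is a constant C = C(n, p₀, p₁) such that for any 0 < δ < β and any finite family 𝕋 of δ-tubes (with any fixed cap partition), ‖Σ_{T∈𝕋} χ_T‖_{BL^p_{k,2A}(U)} ≤ C · ‖Σ_{T∈𝕋} χ_T‖^{1−θ}_{BL^{p₀}_{k,A}(U)} · ‖Σ_{T∈𝕋} χ_T‖^{θ}_{BL^{p₁}_{k,A}(U)}. -/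

import Mathlib

open MeasureTheory Metric InnerProductGeometry
open scoped RealInnerProductSpace ENNReal NNReal

noncomputable section

/-- Euclidean space ℝⁿ. -/
abbrev Esp (n : ℕ) : Type := EuclideanSpace ℝ (Fin n)

/-- The δ-tube with centre `a` and unit direction `v`. -/
def tube (n : ℕ) (δ : ℝ) (a v : Esp n) : Set (Esp n) :=
  {x | |⟪x - a, v⟫| ≤ 1 / 2 ∧ ‖(x - a) - ⟪x - a, v⟫ • v‖ ≤ δ}

/-- Unsigned angle between a vector and a linear subspace: the infimum of the angles
between `v` and the nonzero elements of `V`. -/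
def angleSub {n : ℕ} (v : Esp n) (V : Submodule ℝ (Esp n)) : ℝ :=
  ⨅ w : {w : Esp n // w ∈ V ∧ w ≠ 0}, angle v w.1

/-- Angle between the cap of radius β centred at ω and a subspace. -/
def angleCap {n : ℕ} (β : ℝ) (ω : Esp n) (V : Submodule ℝ (Esp n)) : ℝ :=
  ⨅ u : {u : Esp n // ‖u‖ = 1 ∧ ‖u - ω‖ < β}, angleSub u.1 V

/-- `W` is a maximal β-separated subset of the unit sphere (maximality being expressed by
the fact that every unit vector lies in the cap around some element of `W`). -/
def MaximalSeparated (n : ℕ) (β : ℝ) (W : Set (Esp n)) : Prop :=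
  (∀ ω ∈ W, ‖ω‖ = 1) ∧
  (∀ ω ∈ W, ∀ ω' ∈ W, ω ≠ ω' → β ≤ ‖ω - ω'‖) ∧
  (∀ u : Esp n, ‖u‖ = 1 → ∃ ω ∈ W, ‖u - ω‖ < β)

/-- The quantity μ_𝕋(B) in the definition of the k-broad norm, for the δ-ball centred
at `c`.  The family 𝕋 of tubes is `T : ι → Set (Esp n)`, and `ω i ∈ W` is the centre of
the cap containing the direction of the tube `T i` (so the cap partition is
𝕋[τ_{ω₀}] = {T i : ω i = ω₀}). -/
def broadMu (n k A : ℕ) (p β δ : ℝ) (W : Set (Esp n)) {ι : Type} [Fintype ι]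
    (T : ι → Set (Esp n)) (ω : ι → Esp n) (c : Esp n) : ℝ≥0∞ :=
  ⨅ V : {V : Fin A → Submodule ℝ (Esp n) // ∀ a, Module.finrank ℝ (V a) = k - 1},
    ⨆ ω₀ : {ω₀ : Esp n // ω₀ ∈ W ∧ ∀ a, β < angleCap β ω₀ (V.1 a)},
      ∫⁻ x in ball c δ,
        (∑' i : {i : ι // ω i = ω₀.1}, Set.indicator (T i.1) (fun _ => (1 : ℝ≥0∞)) x) ^ p

/-- The k-broad norm ‖Σ_{T∈𝕋} χ_T‖_{BL^p_{k,A}(U)}, relative to a family of δ-balls with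
centres `b j`, a set `W` of cap centres and a cap assignment `ω` for the tubes `T`. -/
def broadNorm (n k A : ℕ) (p β δ : ℝ) (W : Set (Esp n)) {ι : Type} [Fintype ι]
    (T : ι → Set (Esp n)) (ω : ι → Esp n) (b : ℕ → Esp n) (U : Set (Esp n)) : ℝ≥0∞ :=
  (∑' j : ℕ, volume (ball (b j) δ ∩ U) / volume (ball (b j) δ) *
      broadMu n k A p β δ W T ω (b j)) ^ (1 / p)

/-- A finitely-overlapping cover of ℝⁿ by δ-balls. -/
def FinOverlapCover (n : ℕ) (δ : ℝ) (b : ℕ → Esp n) : Prop :=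
  (∀ x : Esp n, ∃ j, x ∈ ball (b j) δ) ∧
  (∀ x : Esp n, {j : ℕ | x ∈ ball (b j) δ}.Finite ∧ {j : ℕ | x ∈ ball (b j) δ}.ncard ≤ 5 ^ n)

lemma tube_measurableSet (n : ℕ) (δ : ℝ) (a v : Esp n) : MeasurableSet (tube n δ a v) := by
  have h1 : Continuous fun x : Esp n => ⟪x - a, v⟫ :=
    (continuous_id.sub continuous_const).inner continuous_const
  have h2 : IsClosed (tube n δ a v) := by
    have : tube n δ a v = {x : Esp n | |⟪x - a, v⟫| ≤ 1 / 2} ∩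
        {x : Esp n | ‖(x - a) - ⟪x - a, v⟫ • v‖ ≤ δ} := rfl
    rw [this]
    exact (isClosed_le (continuous_abs.comp h1) continuous_const).inter
      (isClosed_le (((continuous_id.sub continuous_const).sub
        (h1.smul continuous_const)).norm) continuous_const)
  exact h2.measurableSet

lemma cancel_rpow (x : ℝ≥0∞) {e : ℝ} (he : e ≠ 0) : (x ^ e) ^ (1 / e) = x := by
  rw [← ENNReal.rpow_mul, mul_one_div, div_self he, ENNReal.rpow_one]

lemma lintegral_rpow_interp {α : Type*} [MeasurableSpace α] (ν : Measure α)
    (F : α → ℝ≥0∞) (hF : Measurable F) {p₀ p₁ e₀ e₁ : ℝ}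
    (hp₀ : 0 < p₀) (hp₁ : 0 < p₁) (h₀ : 0 ≤ e₀) (h₁ : 0 ≤ e₁) (hsum : e₀ + e₁ = 1) :
    ∫⁻ x, F x ^ (p₀ * e₀ + p₁ * e₁) ∂ν ≤
      (∫⁻ x, F x ^ p₀ ∂ν) ^ e₀ * (∫⁻ x, F x ^ p₁ ∂ν) ^ e₁ := by
  rcases h₀.eq_or_lt with rfl | h₀'
  · have he : e₁ = 1 := by linarith
    subst he; simp
  rcases h₁.eq_or_lt with rfl | h₁'
  · have he : e₀ = 1 := by linarith
    subst he; simp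
  have hconj : Real.HolderConjugate (1 / e₀) (1 / e₁) := by
    constructor
    · rw [one_div, inv_inv, one_div, inv_inv, inv_one]; exact hsum
    · positivity
    · positivity
  have hm₀ : AEMeasurable (fun x => F x ^ (p₀ * e₀)) ν :=
    (ENNReal.continuous_rpow_const.measurable.comp hF).aemeasurable
  have hm₁ : AEMeasurable (fun x => F x ^ (p₁ * e₁)) ν :=
    (ENNReal.continuous_rpow_const.measurable.comp hF).aemeasurable
  have h := ENNReal.lintegral_mul_le_Lp_mul_Lq ν hconj hm₀ hm₁
  simp only [Pi.mul_apply] at h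
  calc ∫⁻ x, F x ^ (p₀ * e₀ + p₁ * e₁) ∂ν
      = ∫⁻ x, F x ^ (p₀ * e₀) * F x ^ (p₁ * e₁) ∂ν := by
        apply lintegral_congr; intro x
        rw [ENNReal.rpow_add_of_nonneg _ _ (by positivity) (by positivity)]
    _ ≤ (∫⁻ x, (F x ^ (p₀ * e₀)) ^ (1 / e₀) ∂ν) ^ (1 / (1 / e₀)) *
        (∫⁻ x, (F x ^ (p₁ * e₁)) ^ (1 / e₁) ∂ν) ^ (1 / (1 / e₁)) := h
    _ = (∫⁻ x, F x ^ p₀ ∂ν) ^ e₀ * (∫⁻ x, F x ^ p₁ ∂ν) ^ e₁ := by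
        rw [one_div_one_div, one_div_one_div]
        congr 1
        · congr 1; apply lintegral_congr; intro x
          rw [← ENNReal.rpow_mul]; congr 1; field_simp
        · congr 1; apply lintegral_congr; intro x
          rw [← ENNReal.rpow_mul]; congr 1; field_simp

lemma tsum_mul_rpow_le (u v : ℕ → ℝ≥0∞) {e₀ e₁ : ℝ}
    (h₀ : 0 ≤ e₀) (h₁ : 0 ≤ e₁) (hsum : e₀ + e₁ = 1) :
    ∑' j, u j ^ e₀ * v j ^ e₁ ≤ (∑' j, u j) ^ e₀ * (∑' j, v j) ^ e₁ := by
  rcases h₀.eq_or_lt with rfl | h₀'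
  · have he : e₁ = 1 := by linarith
    subst he; simp
  rcases h₁.eq_or_lt with rfl | h₁'
  · have he : e₀ = 1 := by linarith
    subst he; simp
  have hconj : Real.HolderConjugate (1 / e₀) (1 / e₁) := by
    constructor
    · rw [one_div, inv_inv, one_div, inv_inv, inv_one]; exact hsum
    · positivity
    · positivity
  have h := ENNReal.lintegral_mul_le_Lp_mul_Lq (Measure.count : Measure ℕ) hconj
    (f := fun j => u j ^ e₀) (g := fun j => v j ^ e₁)
    (measurable_of_countable _).aemeasurable (measurable_of_countable _).aemeasurable
  simp only [Pi.mul_apply] at h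
  rw [lintegral_count, lintegral_count, lintegral_count] at h
  calc ∑' j, u j ^ e₀ * v j ^ e₁
      ≤ (∑' j, (u j ^ e₀) ^ (1 / e₀)) ^ (1 / (1 / e₀)) *
        (∑' j, (v j ^ e₁) ^ (1 / e₁)) ^ (1 / (1 / e₁)) := h
    _ = (∑' j, u j) ^ e₀ * (∑' j, v j) ^ e₁ := by
        rw [one_div_one_div, one_div_one_div]
        congr 1
        · congr 1; exact tsum_congr fun j => cancel_rpow _ h₀'.ne'
        · congr 1; exact tsum_congr fun j => cancel_rpow _ h₁'.ne'


lemma nonempty_tuple (n k A : ℕ) (hkn : k - 1 ≤ n) :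
    Nonempty {V : Fin A → Submodule ℝ (Esp n) // ∀ a, Module.finrank ℝ (V a) = k - 1} := by
  classical
  set f : Fin (k - 1) → Esp n :=
    fun i => (EuclideanSpace.basisFun (Fin n) ℝ).toBasis (Fin.castLE hkn i) with hf
  have hli : LinearIndependent ℝ f :=
    (EuclideanSpace.basisFun (Fin n) ℝ).toBasis.linearIndependent.comp _
      (Fin.castLE_injective hkn)
  refine ⟨⟨fun _ => Submodule.span ℝ (Set.range f), fun _ => ?_⟩⟩
  rw [finrank_span_eq_card hli, Fintype.card_fin]

def concatV {n A : ℕ} (V0 V1 : Fin A → Submodule ℝ (Esp n)) : Fin (2 * A) → Submodule ℝ (Esp n) :=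
  fun j => if h : (j : ℕ) < A then V0 ⟨j, h⟩ else V1 ⟨(j : ℕ) - A, by have := j.isLt; omega⟩

lemma concatV_rank {n A k : ℕ} {V0 V1 : Fin A → Submodule ℝ (Esp n)}
    (h0 : ∀ a, Module.finrank ℝ (V0 a) = k) (h1 : ∀ a, Module.finrank ℝ (V1 a) = k) :
    ∀ j, Module.finrank ℝ (concatV V0 V1 j) = k := by
  intro j
  unfold concatV
  by_cases h : (j : ℕ) < A
  · rw [dif_pos h]; exact h0 _
  · rw [dif_neg h]; exact h1 _

lemma concatV_left {n A : ℕ} (V0 V1 : Fin A → Submodule ℝ (Esp n)) (a : Fin A) :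
    concatV V0 V1 ⟨a.1, by have := a.isLt; omega⟩ = V0 a := by
  unfold concatV
  rw [dif_pos (show ((⟨a.1, by have := a.isLt; omega⟩ : Fin (2 * A)) : ℕ) < A from a.isLt)]

lemma concatV_right {n A : ℕ} (V0 V1 : Fin A → Submodule ℝ (Esp n)) (a : Fin A) :
    concatV V0 V1 ⟨A + a.1, by have := a.isLt; omega⟩ = V1 a := by
  unfold concatV
  rw [dif_neg (by simp)]
  congr 1
  apply Fin.ext
  simp


lemma broadMu_interp (n k A : ℕ) (hkn : k - 1 ≤ n) (β δ : ℝ)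
    (W : Set (Esp n)) {ι : Type} [Fintype ι] (T : ι → Set (Esp n))
    (hT : ∀ i, MeasurableSet (T i)) (ω : ι → Esp n) (c : Esp n)
    {p₀ p₁ e₀ e₁ : ℝ} (hp₀ : 0 < p₀) (hp₁ : 0 < p₁)
    (h₀ : 0 ≤ e₀) (h₁ : 0 ≤ e₁) (hsum : e₀ + e₁ = 1) :
    broadMu n k (2 * A) (p₀ * e₀ + p₁ * e₁) β δ W T ω c ≤
      broadMu n k A p₀ β δ W T ω c ^ e₀ * broadMu n k A p₁ β δ W T ω c ^ e₁ := by
  classical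
  haveI hne : Nonempty {V : Fin A → Submodule ℝ (Esp n) // ∀ a, Module.finrank ℝ (V a) = k - 1} :=
    nonempty_tuple n k A hkn
  set F : Esp n → Esp n → ℝ≥0∞ :=
    fun ω₀ x => ∑' i : {i : ι // ω i = ω₀}, Set.indicator (T i.1) (fun _ => (1 : ℝ≥0∞)) x with hFdef
  have hFmeas : ∀ ω₀, Measurable (F ω₀) := by
    intro ω₀
    exact Measurable.ennreal_tsum fun i => (measurable_const.indicator (hT i.1))
  have hFle : ∀ ω₀ x, F ω₀ x ≤ (Fintype.card ι : ℝ≥0∞) := by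
    intro ω₀ x
    rw [hFdef]
    simp only
    rw [tsum_fintype]
    calc ∑ i : {i : ι // ω i = ω₀}, Set.indicator (T i.1) (fun _ => (1 : ℝ≥0∞)) x
        ≤ ∑ _i : {i : ι // ω i = ω₀}, (1 : ℝ≥0∞) := by
          apply Finset.sum_le_sum
          intro i _
          by_cases h : x ∈ T i.1 <;> simp [Set.indicator_apply, h]
      _ = (Fintype.card {i : ι // ω i = ω₀} : ℝ≥0∞) := by simp
      _ ≤ (Fintype.card ι : ℝ≥0∞) := by
          exact_mod_cast Nat.cast_le.2 (Fintype.card_subtype_le _)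
  set S : ℝ → {V : Fin A → Submodule ℝ (Esp n) // ∀ a, Module.finrank ℝ (V a) = k - 1} → ℝ≥0∞ :=
    fun q V => ⨆ ω₀ : {ω₀ : Esp n // ω₀ ∈ W ∧ ∀ a, β < angleCap β ω₀ (V.1 a)},
      ∫⁻ x in ball c δ, F ω₀.1 x ^ q with hSdef
  have hmuA : ∀ q, broadMu n k A q β δ W T ω c = ⨅ V, S q V := fun q => rfl
  have hSfin : ∀ (q : ℝ), 0 ≤ q → ∀ V, S q V ≠ ∞ := by
    intro q hq V
    have hb : S q V ≤ (Fintype.card ι : ℝ≥0∞) ^ q * volume (ball c δ) := by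
      apply iSup_le
      intro ω₀
      calc ∫⁻ x in ball c δ, F ω₀.1 x ^ q
          ≤ ∫⁻ _x in ball c δ, (Fintype.card ι : ℝ≥0∞) ^ q := by
            exact lintegral_mono fun x => ENNReal.rpow_le_rpow (hFle _ x) hq
        _ = (Fintype.card ι : ℝ≥0∞) ^ q * volume (ball c δ) := by
            rw [setLIntegral_const]
    exact ne_top_of_le_ne_top
      (ENNReal.mul_ne_top (ENNReal.rpow_lt_top_of_nonneg hq (ENNReal.natCast_ne_top _)).ne
        measure_ball_lt_top.ne) hb
  -- key per-tuple bound
  have key : ∀ V0 V1, broadMu n k (2 * A) (p₀ * e₀ + p₁ * e₁) β δ W T ω c ≤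
      S p₀ V0 ^ e₀ * S p₁ V1 ^ e₁ := by
    intro V0 V1
    have hrank : ∀ j, Module.finrank ℝ (concatV V0.1 V1.1 j) = k - 1 := concatV_rank V0.2 V1.2
    have h1 : broadMu n k (2 * A) (p₀ * e₀ + p₁ * e₁) β δ W T ω c ≤
        ⨆ ω₀ : {ω₀ : Esp n // ω₀ ∈ W ∧ ∀ j, β < angleCap β ω₀ (concatV V0.1 V1.1 j)},
          ∫⁻ x in ball c δ, F ω₀.1 x ^ (p₀ * e₀ + p₁ * e₁) :=
      iInf_le
        (fun V : {V : Fin (2 * A) → Submodule ℝ (Esp n) // ∀ a, Module.finrank ℝ (V a) = k - 1} =>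
          ⨆ ω₀ : {ω₀ : Esp n // ω₀ ∈ W ∧ ∀ j, β < angleCap β ω₀ (V.1 j)},
            ∫⁻ x in ball c δ, F ω₀.1 x ^ (p₀ * e₀ + p₁ * e₁))
        ⟨concatV V0.1 V1.1, hrank⟩
    refine h1.trans (iSup_le fun ω₀ => ?_)
    have hadm0 : ω₀.1 ∈ W ∧ ∀ a, β < angleCap β ω₀.1 (V0.1 a) := by
      refine ⟨ω₀.2.1, fun a => ?_⟩
      have := ω₀.2.2 ⟨a.1, by have := a.isLt; omega⟩
      rwa [concatV_left] at this
    have hadm1 : ω₀.1 ∈ W ∧ ∀ a, β < angleCap β ω₀.1 (V1.1 a) := by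
      refine ⟨ω₀.2.1, fun a => ?_⟩
      have := ω₀.2.2 ⟨A + a.1, by have := a.isLt; omega⟩
      rwa [concatV_right] at this
    calc ∫⁻ x in ball c δ, F ω₀.1 x ^ (p₀ * e₀ + p₁ * e₁)
        ≤ (∫⁻ x in ball c δ, F ω₀.1 x ^ p₀) ^ e₀ * (∫⁻ x in ball c δ, F ω₀.1 x ^ p₁) ^ e₁ :=
          lintegral_rpow_interp _ _ (hFmeas _) hp₀ hp₁ h₀ h₁ hsum
      _ ≤ S p₀ V0 ^ e₀ * S p₁ V1 ^ e₁ := by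
          apply mul_le_mul'
          · exact ENNReal.rpow_le_rpow
              (le_iSup (fun ω₀' : {ω₀' : Esp n // ω₀' ∈ W ∧ ∀ a, β < angleCap β ω₀' (V0.1 a)} =>
                ∫⁻ x in ball c δ, F ω₀'.1 x ^ p₀) ⟨ω₀.1, hadm0⟩) h₀
          · exact ENNReal.rpow_le_rpow
              (le_iSup (fun ω₀' : {ω₀' : Esp n // ω₀' ∈ W ∧ ∀ a, β < angleCap β ω₀' (V1.1 a)} =>
                ∫⁻ x in ball c δ, F ω₀'.1 x ^ p₁) ⟨ω₀.1, hadm1⟩) h₁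
  -- infimum manipulations
  have easy : ∀ (g : {V : Fin A → Submodule ℝ (Esp n) // ∀ a, Module.finrank ℝ (V a) = k - 1}
      → ℝ≥0∞) (d : ℝ), 0 ≤ d → (⨅ V, g V) ^ d ≤ ⨅ V, g V ^ d :=
    fun g d hd => le_iInf fun V => ENNReal.rpow_le_rpow (iInf_le _ V) hd
  have hpow_iInf : ∀ (g : {V : Fin A → Submodule ℝ (Esp n) // ∀ a, Module.finrank ℝ (V a) = k - 1}
      → ℝ≥0∞) (e : ℝ), 0 ≤ e → (⨅ V, g V ^ e) = (⨅ V, g V) ^ e := by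
    intro g e he
    rcases he.eq_or_lt with rfl | he'
    · simp
    apply le_antisymm _ (easy g e he)
    have h2 := easy (fun V => g V ^ e) (1 / e) (by positivity)
    have h3 : (⨅ V, (g V ^ e) ^ (1 / e)) = ⨅ V, g V :=
      iInf_congr fun V => cancel_rpow _ he'.ne'
    have h4 := ENNReal.rpow_le_rpow (h2.trans h3.le) he'.le
    rwa [← ENNReal.rpow_mul, one_div, inv_mul_cancel₀ he'.ne', ENNReal.rpow_one] at h4
  have hfin₀ : ∀ V0, S p₀ V0 ^ e₀ ≠ ∞ :=
    fun V0 => (ENNReal.rpow_lt_top_of_nonneg h₀ (hSfin p₀ hp₀.le V0)).ne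
  have hfin₁ : ((⨅ V1, S p₁ V1) ^ e₁ : ℝ≥0∞) ≠ ∞ := by
    refine (ENNReal.rpow_lt_top_of_nonneg h₁ ?_).ne
    exact ne_top_of_le_ne_top (hSfin p₁ hp₁.le hne.some) (iInf_le _ hne.some)
  calc broadMu n k (2 * A) (p₀ * e₀ + p₁ * e₁) β δ W T ω c
      ≤ ⨅ V0, ⨅ V1, S p₀ V0 ^ e₀ * S p₁ V1 ^ e₁ :=
        le_iInf fun V0 => le_iInf fun V1 => key V0 V1
    _ = ⨅ V0, S p₀ V0 ^ e₀ * (⨅ V1, S p₁ V1) ^ e₁ := by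
        refine iInf_congr fun V0 => ?_
        rw [← ENNReal.mul_iInf (fun h => absurd h (hfin₀ V0)), hpow_iInf _ _ h₁]
    _ = (⨅ V0, S p₀ V0 ^ e₀) * (⨅ V1, S p₁ V1) ^ e₁ := by
        rw [ENNReal.iInf_mul (fun h => absurd h hfin₁)]
    _ = (⨅ V0, S p₀ V0) ^ e₀ * (⨅ V1, S p₁ V1) ^ e₁ := by rw [hpow_iInf _ _ h₀]
    _ = broadMu n k A p₀ β δ W T ω c ^ e₀ * broadMu n k A p₁ β δ W T ω c ^ e₁ := by
        rw [hmuA, hmuA]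



/-- Logarithmic convexity of k-broad norms: if `1/p = (1−θ)/p₀ + θ/p₁` with `θ ∈ [0,1]`,
then there is `C = C(n, p₀, p₁)` such that
`‖Σ_T χ_T‖_{BL^p_{k,2A}(U)} ≤ C ‖Σ_T χ_T‖^{1−θ}_{BL^{p₀}_{k,A}(U)}
· ‖Σ_T χ_T‖^{θ}_{BL^{p₁}_{k,A}(U)}`. -/
theorem statement8 (n k : ℕ) (hn : 2 ≤ n) (hk2 : 2 ≤ k) (hkn : k ≤ n)
    (p p₀ p₁ : ℝ) (hp : 1 ≤ p) (hp₀ : 1 ≤ p₀) (hp₁ : 1 ≤ p₁) (A : ℕ)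
    (θ : ℝ) (hθ0 : 0 ≤ θ) (hθ1 : θ ≤ 1)
    (hconv : 1 / p = (1 - θ) / p₀ + θ / p₁) :
    ∃ C : ℝ, 0 < C ∧
      ∀ (U : Set (Esp n)), MeasurableSet U →
      ∀ (β : ℝ), β < 1 → ∀ (δ : ℝ), 0 < δ → δ < β →
      ∀ (m : ℕ) (a v : Fin m → Esp n), (∀ i, ‖v i‖ = 1) →
      ∀ (W : Set (Esp n)), MaximalSeparated n β W →
      ∀ (ω : Fin m → Esp n), (∀ i, ω i ∈ W ∧ ‖v i - ω i‖ < β) →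
      ∀ (b : ℕ → Esp n),
        broadNorm n k (2 * A) p β δ W (fun i => tube n δ (a i) (v i)) ω b U ≤
          ENNReal.ofReal C *
            broadNorm n k A p₀ β δ W (fun i => tube n δ (a i) (v i)) ω b U ^ (1 - θ) *
            broadNorm n k A p₁ β δ W (fun i => tube n δ (a i) (v i)) ω b U ^ θ := by
  classical
  refine ⟨1, one_pos, ?_⟩
  intro U hU β hβ δ hδ hδβ m a v hv W hW ω hω b
  have hp' : (0 : ℝ) < p := lt_of_lt_of_le one_pos hp
  have hp₀' : (0 : ℝ) < p₀ := lt_of_lt_of_le one_pos hp₀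
  have hp₁' : (0 : ℝ) < p₁ := lt_of_lt_of_le one_pos hp₁
  set e₀ : ℝ := (1 - θ) * p / p₀ with he₀def
  set e₁ : ℝ := θ * p / p₁ with he₁def
  have he₀ : 0 ≤ e₀ := by
    apply div_nonneg (mul_nonneg (by linarith) hp'.le) hp₀'.le
  have he₁ : 0 ≤ e₁ := by
    apply div_nonneg (mul_nonneg hθ0 hp'.le) hp₁'.le
  have hsum : e₀ + e₁ = 1 := by
    have h : e₀ + e₁ = p * ((1 - θ) / p₀ + θ / p₁) := by
      rw [he₀def, he₁def]; field_simp
    rw [h, ← hconv]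
    field_simp
  have hpe : p = p₀ * e₀ + p₁ * e₁ := by
    rw [he₀def, he₁def]; field_simp; ring
  set TT : Fin m → Set (Esp n) := fun i => tube n δ (a i) (v i) with hTT
  have hTmeas : ∀ i, MeasurableSet (TT i) := fun i => tube_measurableSet n δ (a i) (v i)
  have hkn' : k - 1 ≤ n := le_trans (Nat.sub_le k 1) hkn
  have hmu : ∀ j : ℕ, broadMu n k (2 * A) p β δ W TT ω (b j) ≤
      broadMu n k A p₀ β δ W TT ω (b j) ^ e₀ * broadMu n k A p₁ β δ W TT ω (b j) ^ e₁ := by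
    intro j
    have h := broadMu_interp n k A hkn' β δ W TT hTmeas ω (b j) hp₀' hp₁' he₀ he₁ hsum
    rwa [← hpe] at h
  rw [ENNReal.ofReal_one, one_mul]
  unfold broadNorm
  set w : ℕ → ℝ≥0∞ := fun j => volume (ball (b j) δ ∩ U) / volume (ball (b j) δ) with hw
  set X : ℝ≥0∞ := ∑' j : ℕ, w j * broadMu n k A p₀ β δ W TT ω (b j) with hX
  set Y : ℝ≥0∞ := ∑' j : ℕ, w j * broadMu n k A p₁ β δ W TT ω (b j) with hY
  have hchain : (∑' j : ℕ, w j * broadMu n k (2 * A) p β δ W TT ω (b j)) ≤ X ^ e₀ * Y ^ e₁ := by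
    calc (∑' j : ℕ, w j * broadMu n k (2 * A) p β δ W TT ω (b j))
        ≤ ∑' j : ℕ, (w j * broadMu n k A p₀ β δ W TT ω (b j)) ^ e₀ *
            (w j * broadMu n k A p₁ β δ W TT ω (b j)) ^ e₁ := by
          apply ENNReal.tsum_le_tsum
          intro j
          calc w j * broadMu n k (2 * A) p β δ W TT ω (b j)
              ≤ w j * (broadMu n k A p₀ β δ W TT ω (b j) ^ e₀ *
                  broadMu n k A p₁ β δ W TT ω (b j) ^ e₁) := mul_le_mul_right (hmu j) _
            _ = (w j * broadMu n k A p₀ β δ W TT ω (b j)) ^ e₀ *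
                (w j * broadMu n k A p₁ β δ W TT ω (b j)) ^ e₁ := by
                rw [ENNReal.mul_rpow_of_nonneg _ _ he₀, ENNReal.mul_rpow_of_nonneg _ _ he₁]
                rw [show w j ^ e₀ * broadMu n k A p₀ β δ W TT ω (b j) ^ e₀ *
                    (w j ^ e₁ * broadMu n k A p₁ β δ W TT ω (b j) ^ e₁) =
                    (w j ^ e₀ * w j ^ e₁) * (broadMu n k A p₀ β δ W TT ω (b j) ^ e₀ *
                      broadMu n k A p₁ β δ W TT ω (b j) ^ e₁) from by ring]
                rw [← ENNReal.rpow_add_of_nonneg _ _ he₀ he₁, hsum, ENNReal.rpow_one]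
      _ ≤ X ^ e₀ * Y ^ e₁ :=
          tsum_mul_rpow_le (fun j => w j * broadMu n k A p₀ β δ W TT ω (b j))
            (fun j => w j * broadMu n k A p₁ β δ W TT ω (b j)) he₀ he₁ hsum
  have hmono := ENNReal.rpow_le_rpow hchain (show (0:ℝ) ≤ 1 / p by positivity)
  refine hmono.trans ?_
  have he₀p : e₀ * (1 / p) = 1 / p₀ * (1 - θ) := by
    rw [he₀def]; field_simp
  have he₁p : e₁ * (1 / p) = 1 / p₁ * θ := by
    rw [he₁def]; field_simp
  rw [ENNReal.mul_rpow_of_nonneg _ _ (show (0:ℝ) ≤ 1 / p by positivity),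
    ← ENNReal.rpow_mul, ← ENNReal.rpow_mul, he₀p, he₁p,
    ENNReal.rpow_mul X, ENNReal.rpow_mul Y]


end
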